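/- Let φ : V × V → W be a flat bilinear map and let X ∈ V be a regular element of φ (i.e. the rank of the linear map φ_X : Y ↦ φ(X,Y) is maximal among all elements of V). Then span{φ(Y,Z) : Y ∈ V, Z ∈ ker φ_X} is contained in φ_X(V) ∩ φ_X(V)^⊥, where φ_X(V)^⊥ denotes the orthogonal complement of the image φ_X(V) with respect to the given symmetric bilinear form on W. -/

import Mathlib

open Module

lemma key_aux
    {V W : Type*} [AddCommGroup V] [Module ℝ V] [FiniteDimensional ℝ V]
    [AddCommGroup W] [Module ℝ W] [FiniteDimensional ℝ W]
    (φ : V →ₗ[ℝ] V →ₗ[ℝ] W) (X : V)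
    (hreg : ∀ Z : V,
      finrank ℝ (LinearMap.range (φ Z)) ≤ finrank ℝ (LinearMap.range (φ X)))
    (Y Z : V) (hZ : φ X Z = 0) :
    φ Y Z ∈ LinearMap.range (φ X) := by
  by_contra hw
  set r := finrank ℝ (LinearMap.range (φ X)) with hr
  set w : W := φ Y Z with hwdef
  -- choose preimages of a basis of the range
  let b : Basis (Fin r) ℝ (LinearMap.range (φ X)) := finBasis ℝ _
  have hmem : ∀ i, (b i : W) ∈ LinearMap.range (φ X) := fun i => (b i).2
  choose u hu using fun i => hmem i
  have hbcoe : LinearIndependent ℝ (fun i => (b i : W)) :=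
    b.linearIndependent.map' (Submodule.subtype _) (Submodule.ker_subtype _)
  have hspan : Submodule.span ℝ (Set.range (fun i => (b i : W))) =
      LinearMap.range (φ X) := by
    have : (fun i => (b i : W)) = (Submodule.subtype _) ∘ b := rfl
    rw [this, Set.range_comp, Submodule.span_image, b.span_eq, Submodule.map_top,
      Submodule.range_subtype]
  -- the snoc family at t = 0
  have hφXu : (fun i => φ X (u i)) = fun i => (b i : W) := funext fun i => hu i
  set A : Fin (r + 1) → W := Fin.snoc (fun i => φ X (u i)) w with hA
  have hAind : LinearIndependent ℝ A := by
    rw [hA, linearIndependent_fin_snoc, hφXu]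
    exact ⟨hbcoe, by rw [hspan]; exact hw⟩
  set C : Fin (r + 1) → W := Fin.snoc (fun i => φ Y (u i)) 0 with hC
  -- transport to a normed space
  let e : W ≃ₗ[ℝ] (Fin (finrank ℝ W) → ℝ) := (finBasis ℝ W).equivFun
  set g : ℝ → Fin (r + 1) → (Fin (finrank ℝ W) → ℝ) :=
    fun t i => e (A i) + t • e (C i) with hg
  have hgcont : Continuous g := by
    apply continuous_pi
    intro i
    exact continuous_const.add (continuous_id.smul continuous_const)
  have hg0 : LinearIndependent ℝ (g 0) := by
    have : g 0 = e ∘ A := by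
      funext i; simp [hg]
    rw [this]
    exact hAind.map' e.toLinearMap e.ker
  have hopen : IsOpen {t : ℝ | LinearIndependent ℝ (g t)} :=
    isOpen_setOf_linearIndependent.preimage hgcont
  obtain ⟨ε, hε, hball⟩ := Metric.isOpen_iff.1 hopen 0 hg0
  set t : ℝ := ε / 2 with ht
  have htne : t ≠ 0 := by positivity
  have htmem : t ∈ Metric.ball (0 : ℝ) ε := by
    simp only [Metric.mem_ball, dist_zero_right, Real.norm_eq_abs, ht]
    rw [abs_of_pos (by positivity)]
    linarith
  have hgt : LinearIndependent ℝ (g t) := hball htmem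
  -- pull back independence to W
  set F : Fin (r + 1) → W := fun i => A i + t • C i with hF
  have hgF : g t = e ∘ F := by
    funext i; simp [hg, hF, map_add, map_smul]
  have hFind : LinearIndependent ℝ F := by
    have := hgt
    rw [hgF] at this
    exact LinearIndependent.of_comp e.toLinearMap this
  -- each F i lies in range (φ (X + t • Y))
  have hFmem : ∀ i, F i ∈ LinearMap.range (φ (X + t • Y)) := by
    intro i
    rcases eq_or_ne i (Fin.last r) with rfl | hi
    · have hAl : A (Fin.last r) = w := by simp [hA]
      have hCl : C (Fin.last r) = 0 := by simp [hC]
      have : F (Fin.last r) = w := by simp [hF, hAl, hCl]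
      rw [this]
      refine ⟨t⁻¹ • Z, ?_⟩
      simp only [map_add, map_smul, LinearMap.add_apply, LinearMap.smul_apply, hZ]
      rw [zero_add, smul_smul, inv_mul_cancel₀ htne, one_smul]
    · obtain ⟨j, rfl⟩ := Fin.exists_castSucc_eq.2 hi
      have hAj : A j.castSucc = φ X (u j) := by simp [hA, Fin.snoc_castSucc]
      have hCj : C j.castSucc = φ Y (u j) := by simp [hC, Fin.snoc_castSucc]
      refine ⟨u j, ?_⟩
      simp [hAj, hCj, hF, map_add, map_smul]
  -- contradiction via dimension count
  have hle : Submodule.span ℝ (Set.range F) ≤ LinearMap.range (φ (X + t • Y)) :=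
    Submodule.span_le.2 (Set.range_subset_iff.2 hFmem)
  have h1 : finrank ℝ (Submodule.span ℝ (Set.range F)) = r + 1 := by
    rw [finrank_span_eq_card hFind, Fintype.card_fin]
  have h2 : finrank ℝ (Submodule.span ℝ (Set.range F)) ≤ r :=
    le_trans (Submodule.finrank_mono hle) (hreg _)
  omega

/-- Lemma (flat bilinear forms): if `X` is a regular element of a flat bilinear map `φ`,
then the span of `φ(V × ker φ_X)` is contained in `φ_X(V) ∩ φ_X(V)^⊥`. -/
theorem stmt_0
    {V W : Type*} [AddCommGroup V] [Module ℝ V] [FiniteDimensional ℝ V]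
    [AddCommGroup W] [Module ℝ W] [FiniteDimensional ℝ W]
    (B : LinearMap.BilinForm ℝ W) (hBsymm : ∀ x y : W, B x y = B y x)
    (φ : V →ₗ[ℝ] V →ₗ[ℝ] W)
    (hflat : ∀ X Y Z T : V, B (φ X Y) (φ Z T) = B (φ X T) (φ Z Y))
    (X : V)
    (hreg : ∀ Z : V,
      finrank ℝ (LinearMap.range (φ Z)) ≤ finrank ℝ (LinearMap.range (φ X))) :
    Submodule.span ℝ {w : W | ∃ Y : V, ∃ Z ∈ LinearMap.ker (φ X), φ Y Z = w} ≤
      LinearMap.range (φ X) ⊓ B.orthogonal (LinearMap.range (φ X)) := by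
  rw [Submodule.span_le]
  rintro w ⟨Y, Z, hZ, rfl⟩
  rw [LinearMap.mem_ker] at hZ
  refine ⟨key_aux φ X hreg Y Z hZ, ?_⟩
  intro v hv
  obtain ⟨T, rfl⟩ := hv
  show B (φ X T) (φ Y Z) = 0
  rw [hBsymm, hflat Y Z X T, hZ]
  simp
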